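/- Let d ≥ 1 and let c : (Fin d → ℕ) → ℂ be a family of coefficients such that for every z ∈ ℂ^d the family (c_k · Π_{j} z_j^{k_j})_{k ∈ ℕ^d} is summable, with sum f(z). For r ∈ (0,∞)^d let M_f(r) := sup { |f(z)| : |z_j| = r_j for all j }. Let Λ : ℝ^d → ℝ satisfy M_f(r) ≤ exp(Λ(log r₁, …, log r_d)) for all r ∈ (0,∞)^d. Then for every multi-index k ∈ ℕ^d and every v ∈ ℝ^d one has |c_k| ≤ exp(Λ(v) − ⟨k, v⟩); consequently, whenever Λ*(k) := sup_{v ∈ ℝ^d} (⟨k, v⟩ − Λ(v)) is finite, |c_k| ≤ exp(−Λ*(k)). -/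

import Mathlib

open Finset in
/-- Sum of powers of a primitive root of unity: geometric extraction. -/
lemma rootsum_aux {N : ℕ} (hN : N ≠ 0) {ζ : ℂ} (hζ : IsPrimitiveRoot ζ N) (n : ℤ) :
    ∑ t ∈ Finset.range N, ζ ^ (n * (t : ℤ)) =
      if (N : ℤ) ∣ n then (N : ℂ) else 0 := by
  by_cases hdvd : (N : ℤ) ∣ n
  · have h1 : ∀ t ∈ Finset.range N, ζ ^ (n * (t : ℤ)) = 1 := by
      intro t _
      rw [zpow_mul, (hζ.zpow_eq_one_iff_dvd n).mpr hdvd, one_zpow]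
    rw [Finset.sum_congr rfl h1, Finset.sum_const, Finset.card_range]
    simp [hdvd]
  · set x : ℂ := ζ ^ n with hx
    have hx1 : x ≠ 1 := by
      rw [hx, Ne, hζ.zpow_eq_one_iff_dvd]; exact hdvd
    have hζN : ζ ^ (N : ℤ) = 1 := by
      rw [zpow_natCast]; exact hζ.pow_eq_one
    have hxN : x ^ N = 1 := by
      rw [hx, ← zpow_natCast, ← zpow_mul, mul_comm, zpow_mul, hζN, one_zpow]
    have hterm : ∀ t ∈ Finset.range N, ζ ^ (n * (t : ℤ)) = x ^ t := by
      intro t _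
      rw [hx, ← zpow_natCast (ζ ^ n), ← zpow_mul]
    rw [Finset.sum_congr rfl hterm, geom_sum_eq hx1, hxN, sub_self, zero_div, if_neg hdvd]

theorem multivariate_coefficient_upper_estimate
    (d : ℕ) (hd : 1 ≤ d)
    (c : (Fin d → ℕ) → ℂ) (f : (Fin d → ℂ) → ℂ)
    (hf : ∀ z : Fin d → ℂ,
      HasSum (fun k : Fin d → ℕ => c k * ∏ j : Fin d, z j ^ k j) (f z))
    (Λ : (Fin d → ℝ) → ℝ)
    (hM : ∀ r : Fin d → ℝ, (∀ j, 0 < r j) →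
      sSup {x : ℝ | ∃ z : Fin d → ℂ,
          (∀ j, ‖z j‖ = r j) ∧ x = ‖f z‖}
        ≤ Real.exp (Λ fun j => Real.log (r j))) :
    (∀ (k : Fin d → ℕ) (v : Fin d → ℝ),
      ‖c k‖ ≤ Real.exp (Λ v - ∑ j : Fin d, (k j : ℝ) * v j)) ∧
    (∀ k : Fin d → ℕ,
      BddAbove (Set.range fun v : Fin d → ℝ => (∑ j : Fin d, (k j : ℝ) * v j) - Λ v) →
      ‖c k‖
        ≤ Real.exp (-(sSup (Set.range
            fun v : Fin d → ℝ => (∑ j : Fin d, (k j : ℝ) * v j) - Λ v)))) := by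
  have key : ∀ (k : Fin d → ℕ) (v : Fin d → ℝ),
      ‖c k‖ ≤ Real.exp (Λ v - ∑ j : Fin d, (k j : ℝ) * v j) := by
    intro k v
    set r : Fin d → ℝ := fun j => Real.exp (v j) with hr_def
    have hr : ∀ j, 0 < r j := fun j => Real.exp_pos _
    set b : (Fin d → ℕ) → ℂ := fun m => c m * ∏ j, ((r j : ℂ)) ^ m j with hb_def
    have hbsum : HasSum b (f fun j => (r j : ℂ)) := by
      have := hf (fun j => (r j : ℂ)); exact this
    have hbs : Summable b := hbsum.summable
    set B : (Fin d → ℕ) → ℝ := fun m => ‖b m‖ with hB_def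
    have hBs : Summable B := summable_norm_iff.mpr hbs
    have hBnn : ∀ m, 0 ≤ B m := fun m => norm_nonneg _
    set M : ℝ := Real.exp (Λ v) with hM_def
    have hM0 : 0 < M := Real.exp_pos _
    -- norm of a term on the torus of radii r equals B m
    have hBval : ∀ (m : Fin d → ℕ) (z : Fin d → ℂ), (∀ j, ‖z j‖ = r j) →
        ‖c m * ∏ j, z j ^ m j‖ = B m := by
      intro m z hz
      simp only [hB_def, hb_def, norm_mul, norm_prod, norm_pow]
      congr 1
      refine Finset.prod_congr rfl fun j _ => ?_
      rw [hz j, Complex.norm_real, Real.norm_of_nonneg (hr j).le]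
    -- the sup bound gives a pointwise bound on the torus
    have hfM : ∀ z : Fin d → ℂ, (∀ j, ‖z j‖ = r j) → ‖f z‖ ≤ M := by
      intro z hz
      have hzsum := hf z
      have hnorm : ∀ z' : Fin d → ℂ, (∀ j, ‖z' j‖ = r j) →
          ‖f z'‖ ≤ ∑' m, B m := by
        intro z' hz'
        rw [(hf z').tsum_eq.symm]
        calc ‖∑' m, c m * ∏ j, z' j ^ m j‖ ≤ ∑' m, ‖c m * ∏ j, z' j ^ m j‖ := by
              apply norm_tsum_le_tsum_norm
              have : (fun m => ‖c m * ∏ j, z' j ^ m j‖) = B := by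
                funext m; exact hBval m z' hz'
              rw [this]; exact hBs
          _ = ∑' m, B m := by
              congr 1; funext m; exact hBval m z' hz'
      have hbdd : BddAbove {x : ℝ | ∃ z' : Fin d → ℂ,
          (∀ j, ‖z' j‖ = r j) ∧ x = ‖f z'‖} := by
        refine ⟨∑' m, B m, fun x hx => ?_⟩
        obtain ⟨z', hz', rfl⟩ := hx
        exact le_trans (le_of_eq rfl) (hnorm z' hz')
      have hmem : ‖f z‖ ∈ {x : ℝ | ∃ z' : Fin d → ℂ,
          (∀ j, ‖z' j‖ = r j) ∧ x = ‖f z'‖} := ⟨z, hz, rfl⟩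
      have h1 := le_csSup hbdd hmem
      have h2 := hM r hr
      have h3 : (Λ fun j => Real.log (r j)) = Λ v := by
        congr 1; funext j; simp [hr_def, Real.log_exp]
      rw [h3] at h2
      exact le_trans h1 h2
    -- main estimate: ‖b k‖ ≤ M
    have hbk : ‖b k‖ ≤ M := by
      refine le_of_forall_pos_le_add fun ε hε => ?_
      obtain ⟨F, hF⟩ := ((tendsto_order.1 (tendsto_tsum_compl_atTop_zero B)).2 ε hε).exists
      -- choose N large
      set N : ℕ := 1 + (insert k F).sup (fun m => Finset.univ.sup m) with hN_def
      have hNbig : ∀ m ∈ insert k F, ∀ j, m j < N := by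
        intro m hm j
        have h1 : m j ≤ Finset.univ.sup m := Finset.le_sup (Finset.mem_univ j)
        have h2 : Finset.univ.sup m ≤ (insert k F).sup (fun m => Finset.univ.sup m) :=
          Finset.le_sup hm
        omega
      have hNk : ∀ j, k j < N := hNbig k (Finset.mem_insert_self k F)
      have hN0 : N ≠ 0 := by omega
      have hNpos : (0:ℝ) < (N:ℝ)^d := by positivity
      set ζ : ℂ := Complex.exp (2 * Real.pi * Complex.I / N) with hζ_def
      have hζ : IsPrimitiveRoot ζ N := Complex.isPrimitiveRoot_exp N hN0
      have hζabs : ‖ζ‖ = 1 := by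
        have : (2 * (Real.pi:ℂ) * Complex.I / N) = ((2 * Real.pi / N : ℝ) : ℂ) * Complex.I := by
          push_cast; ring
        rw [hζ_def, this, Complex.norm_exp_ofReal_mul_I]
      have hζnorm : ‖ζ‖ = 1 := by rw [hζabs]
      -- the torus points
      set z : (Fin d → Fin N) → (Fin d → ℂ) :=
        fun t j => (r j : ℂ) * ζ ^ ((t j : ℕ)) with hz_def
      have hz_abs : ∀ t, ∀ j, ‖z t j‖ = r j := by
        intro t j
        simp only [hz_def, norm_mul, norm_pow, hζabs, one_pow, mul_one,
          Complex.norm_real, Real.norm_eq_abs, abs_of_pos (hr j)]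
      -- the weights
      set W : (Fin d → Fin N) → ℂ := fun t => ∏ j, ζ ^ (-(k j : ℤ) * ((t j : ℕ) : ℤ)) with hW_def
      have hWnorm : ∀ t, ‖W t‖ = 1 := by
        intro t
        simp only [hW_def, norm_prod, norm_zpow, hζnorm, one_zpow, Finset.prod_const_one]
      set g : (Fin d → Fin N) → (Fin d → ℕ) → ℂ :=
        fun t m => (c m * ∏ j, (z t j) ^ (m j)) * W t with hg_def
      have hg : ∀ t, HasSum (g t) (f (z t) * W t) := fun t => (hf (z t)).mul_right (W t)
      -- indicator condition
      set w : (Fin d → ℕ) → ℂ := fun m => ∏ j, (if (N:ℤ) ∣ ((m j : ℤ) - (k j : ℤ)) then (N:ℂ) else 0)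
        with hw_def
      -- sum over t of g t m
      have hsum_t : ∀ m, ∑ t : Fin d → Fin N, g t m = b m * w m := by
        intro m
        have hj : ∀ (t : Fin d → Fin N) (j : Fin d),
            (z t j) ^ (m j) * ζ ^ (-(k j : ℤ) * ((t j : ℕ) : ℤ)) =
            ((r j : ℂ)) ^ (m j) * ζ ^ (((m j : ℤ) - (k j : ℤ)) * ((t j : ℕ) : ℤ)) := by
          intro t j
          simp only [hz_def]
          rw [mul_pow, mul_assoc]
          congr 1
          rw [← pow_mul, ← zpow_natCast ζ ((t j : ℕ) * m j), ← zpow_add₀ (hζ.ne_zero hN0)]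
          congr 1
          push_cast
          ring
        have h1 : ∀ t : Fin d → Fin N, g t m =
            b m * ∏ j, ζ ^ (((m j : ℤ) - (k j : ℤ)) * ((t j : ℕ) : ℤ)) := by
          intro t
          simp only [hg_def, hW_def, hb_def]
          rw [mul_assoc, ← Finset.prod_mul_distrib,
            Finset.prod_congr rfl (fun j _ => hj t j), Finset.prod_mul_distrib, ← mul_assoc]
        calc ∑ t : Fin d → Fin N, g t m
            = ∑ t : Fin d → Fin N, b m * ∏ j, ζ ^ (((m j : ℤ) - (k j : ℤ)) * ((t j : ℕ) : ℤ)) :=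
              Finset.sum_congr rfl fun t _ => h1 t
          _ = b m * ∑ t : Fin d → Fin N, ∏ j, ζ ^ (((m j : ℤ) - (k j : ℤ)) * ((t j : ℕ) : ℤ)) := by
              rw [← Finset.mul_sum]
          _ = b m * ∑ t ∈ Fintype.piFinset (fun _ : Fin d => (Finset.univ : Finset (Fin N))),
                ∏ j, ζ ^ (((m j : ℤ) - (k j : ℤ)) * ((t j : ℕ) : ℤ)) := by
              rw [Fintype.piFinset_univ]
          _ = b m * ∏ j, ∑ s : Fin N, ζ ^ (((m j : ℤ) - (k j : ℤ)) * ((s : ℕ) : ℤ)) := by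
              congr 1
              exact (Finset.prod_univ_sum (fun _ : Fin d => (Finset.univ : Finset (Fin N)))
                (fun j s => ζ ^ (((m j : ℤ) - (k j : ℤ)) * ((s : ℕ) : ℤ)))).symm
          _ = b m * w m := by
              congr 1
              refine Finset.prod_congr rfl fun j _ => ?_
              rw [Fin.sum_univ_eq_sum_range (fun s : ℕ => ζ ^ (((m j : ℤ) - (k j : ℤ)) * (s : ℤ))) N]
              exact rootsum_aux hN0 hζ _
      -- the averaged quantity
      set A : ℂ := ∑ t : Fin d → Fin N, f (z t) * W t with hA_def
      have hA_eq : A = ∑' m, b m * w m := by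
        calc A = ∑ t : Fin d → Fin N, ∑' m, g t m := by
              refine Finset.sum_congr rfl fun t _ => ?_
              rw [(hg t).tsum_eq]
          _ = ∑' m, ∑ t : Fin d → Fin N, g t m :=
              (Summable.tsum_finsetSum fun t _ => (hg t).summable).symm
          _ = ∑' m, b m * w m := by
              congr 1; funext m; exact hsum_t m
      have hA_norm : ‖A‖ ≤ (N:ℝ)^d * M := by
        calc ‖A‖ ≤ ∑ t : Fin d → Fin N, ‖f (z t) * W t‖ := norm_sum_le _ _
          _ = ∑ t : Fin d → Fin N, ‖f (z t)‖ := by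
              refine Finset.sum_congr rfl fun t _ => ?_
              rw [norm_mul, hWnorm, mul_one]
          _ ≤ ∑ _t : Fin d → Fin N, M := Finset.sum_le_sum fun t _ => hfM (z t) (hz_abs t)
          _ = (N:ℝ)^d * M := by
              rw [Finset.sum_const, Finset.card_univ, Fintype.card_fun, Fintype.card_fin,
                Fintype.card_fin, nsmul_eq_mul]
              push_cast
              ring
      have hwk : w k = (N:ℂ)^d := by
        simp only [hw_def, sub_self, dvd_zero, if_true]
        rw [Finset.prod_const, Finset.card_univ, Fintype.card_fin]
      -- pointwise bound
      set U : Set (Fin d → ℕ) := {x | x ∉ F} with hU_def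
      have hpt : ∀ m, ‖b m * w m - (if m = k then (N:ℂ)^d * b k else 0)‖ ≤
          (N:ℝ)^d * Set.indicator U B m := by
        intro m
        have hind_nonneg : 0 ≤ Set.indicator U B m :=
          Set.indicator_nonneg (fun x _ => hBnn x) m
        by_cases hmk : m = k
        · subst hmk
          rw [if_pos rfl, hwk, mul_comm, sub_self, norm_zero]
          positivity
        · rw [if_neg hmk, sub_zero]
          by_cases hdv : ∀ j, (N:ℤ) ∣ ((m j : ℤ) - (k j : ℤ))
          · have hwm : w m = (N:ℂ)^d := by
              simp only [hw_def]
              rw [Finset.prod_congr rfl fun j _ => if_pos (hdv j), Finset.prod_const,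
                Finset.card_univ, Fintype.card_fin]
            -- m ∉ F
            obtain ⟨j, hj⟩ := Function.ne_iff.mp hmk
            obtain ⟨q, hq⟩ := hdv j
            have hq0 : q ≠ 0 := by
              intro h
              rw [h, mul_zero, sub_eq_zero] at hq
              exact hj (by exact_mod_cast hq)
            have hkj : (k j : ℤ) < N := by exact_mod_cast hNk j
            have hNle : (N:ℤ) ≤ (m j : ℤ) := by
              rcases lt_or_gt_of_ne hq0 with h | h
              · exfalso
                have h1 : q ≤ -1 := by omega
                have h2 : (N:ℤ) * q ≤ (N:ℤ) * (-1) := by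
                  apply mul_le_mul_of_nonneg_left h1
                  exact_mod_cast Nat.zero_le N
                have h3 : (0:ℤ) ≤ (m j : ℤ) := by positivity
                omega
              · have h1 : (1:ℤ) ≤ q := h
                have h2 : (N:ℤ) * 1 ≤ (N:ℤ) * q := by
                  apply mul_le_mul_of_nonneg_left h1
                  exact_mod_cast Nat.zero_le N
                omega
            have hmF : m ∉ F := by
              intro hmem
              have := hNbig m (Finset.mem_insert_of_mem hmem) j
              omega
            have hUm : m ∈ U := hmF
            rw [Set.indicator_of_mem hUm, hwm, norm_mul, norm_pow, Complex.norm_natCast]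
            rw [mul_comm]
          · push_neg at hdv
            obtain ⟨j, hj⟩ := hdv
            have hwm : w m = 0 := by
              simp only [hw_def]
              exact Finset.prod_eq_zero (Finset.mem_univ j) (if_neg hj)
            rw [hwm, mul_zero, norm_zero]
            positivity
      -- summabilities
      have hsw : Summable (fun m => b m * w m) := by
        have heq : (fun m => b m * w m) = fun m => ∑ t : Fin d → Fin N, g t m :=
          funext fun m => (hsum_t m).symm
        rw [heq]
        exact summable_sum fun t _ => (hg t).summable
      have hsite : Summable (fun m : Fin d → ℕ => if m = k then (N:ℂ)^d * b k else 0) :=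
        (hasSum_ite_eq k _).summable
      have hsdiff : Summable (fun m => b m * w m - (if m = k then (N:ℂ)^d * b k else 0)) :=
        hsw.sub hsite
      have hsrhs : Summable (fun m => (N:ℝ)^d * Set.indicator U B m) :=
        (hBs.indicator U).mul_left _
      have hsnorm : Summable (fun m => ‖b m * w m - (if m = k then (N:ℂ)^d * b k else 0)‖) :=
        Summable.of_nonneg_of_le (fun m => norm_nonneg _) hpt hsrhs
      -- the tail bound
      have htail : ∑' m, Set.indicator U B m ≤ ε := by
        rw [← tsum_subtype U B]
        exact le_of_lt hF
      have hstep : A - (N:ℂ)^d * b k =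
          ∑' m, (b m * w m - (if m = k then (N:ℂ)^d * b k else 0)) := by
        rw [Summable.tsum_sub hsw hsite, tsum_ite_eq, hA_eq]
      have hdiff_norm : ‖A - (N:ℂ)^d * b k‖ ≤ (N:ℝ)^d * ε := by
        rw [hstep]
        calc ‖∑' m, (b m * w m - (if m = k then (N:ℂ)^d * b k else 0))‖
            ≤ ∑' m, ‖b m * w m - (if m = k then (N:ℂ)^d * b k else 0)‖ :=
              norm_tsum_le_tsum_norm hsnorm
          _ ≤ ∑' m, (N:ℝ)^d * Set.indicator U B m := Summable.tsum_le_tsum hpt hsnorm hsrhs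
          _ = (N:ℝ)^d * ∑' m, Set.indicator U B m := tsum_mul_left
          _ ≤ (N:ℝ)^d * ε := by
              apply mul_le_mul_of_nonneg_left htail
              positivity
      have hfinal : (N:ℝ)^d * ‖b k‖ ≤ (N:ℝ)^d * (M + ε) := by
        have h1 : ‖(N:ℂ)^d * b k‖ = (N:ℝ)^d * ‖b k‖ := by
          rw [norm_mul, norm_pow, Complex.norm_natCast]
        calc (N:ℝ)^d * ‖b k‖ = ‖(N:ℂ)^d * b k‖ := h1.symm
          _ = ‖A - (A - (N:ℂ)^d * b k)‖ := by rw [sub_sub_cancel]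
          _ ≤ ‖A‖ + ‖A - (N:ℂ)^d * b k‖ := norm_sub_le _ _
          _ ≤ (N:ℝ)^d * M + (N:ℝ)^d * ε := add_le_add hA_norm hdiff_norm
          _ = (N:ℝ)^d * (M + ε) := by ring
      exact le_of_mul_le_mul_left hfinal hNpos
    -- conclude
    have hprod : ‖b k‖ = ‖c k‖ * Real.exp (∑ j, (k j : ℝ) * v j) := by
      simp only [hb_def, norm_mul, norm_prod, norm_pow, Complex.norm_real,
        Real.norm_of_nonneg (Real.exp_pos _).le]
      rw [Real.exp_sum]
      congr 1
      refine Finset.prod_congr rfl fun j _ => ?_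
      simp only [Complex.norm_real, Real.norm_eq_abs, abs_of_pos (hr j)]
      rw [show r j = Real.exp (v j) from rfl, ← Real.exp_nat_mul]
    rw [Real.exp_sub, le_div_iff₀ (Real.exp_pos _)]
    rw [hprod] at hbk
    exact hbk
  refine ⟨key, fun k hbdd => ?_⟩
  rcases eq_or_ne (c k) 0 with h0 | h0
  · rw [h0, norm_zero]; exact (Real.exp_pos _).le
  · have hpos : 0 < ‖c k‖ := norm_pos_iff.mpr h0
    have hub : ∀ y ∈ Set.range (fun v : Fin d → ℝ => (∑ j : Fin d, (k j : ℝ) * v j) - Λ v),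
        y ≤ -Real.log (‖c k‖) := by
      rintro y ⟨v, rfl⟩
      have := key k v
      have hlog : Real.log (‖c k‖) ≤ Λ v - ∑ j, (k j : ℝ) * v j :=
        (Real.log_le_iff_le_exp hpos).mpr this
      show (∑ j : Fin d, (k j : ℝ) * v j) - Λ v ≤ -Real.log (‖c k‖)
      linarith
    have hne : (Set.range fun v : Fin d → ℝ => (∑ j : Fin d, (k j : ℝ) * v j) - Λ v).Nonempty :=
      Set.range_nonempty _
    have hsup := csSup_le hne hub
    have : Real.log (‖c k‖) ≤ -(sSup (Set.range
        fun v : Fin d → ℝ => (∑ j : Fin d, (k j : ℝ) * v j) - Λ v)) := by linarith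
    calc ‖c k‖ = Real.exp (Real.log (‖c k‖)) := (Real.exp_log hpos).symm
      _ ≤ _ := Real.exp_le_exp.mpr this
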